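/- (Theorem 1) In the IRS-aided wireless-powered MEC system where downlink WPT and uplink offloading may use two different IRS beamforming vectors, but all devices share a common offloading beamforming vector, TDMA offloading and NOMA offloading achieve the same optimal computation rate: R_TDMA^2 = R_NOMA^2. -/

import Mathlib

open Finset

/-- Effective channel power gain of device `k` under IRS beamforming vector `v`. -/
noncomputable def gain {K N : ℕ} (h : Fin K → ℂ) (q : Fin K → Fin N → ℂ)
    (k : Fin K) (v : Fin N → ℂ) : ℝ :=
  ‖(starRingEnd ℂ) (h k) + ∑ n, (starRingEnd ℂ) (q k n) * v n‖ ^ 2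

/-- Optimal computation rate of TDMA offloading with separate IRS beamforming vectors for
DL WPT and UL offloading (Case 2). -/
noncomputable def RTDMA2 {K N : ℕ} (h : Fin K → ℂ) (q : Fin K → Fin N → ℂ)
    (B T C γ η P σ2 : ℝ) : ℝ :=
  sSup {r : ℝ | ∃ (v₀ v₁ : Fin N → ℂ) (τ₀ : ℝ) (τ p f : Fin K → ℝ),
    (∀ n, ‖v₀ n‖ = 1) ∧ (∀ n, ‖v₁ n‖ = 1) ∧ 0 ≤ τ₀ ∧
    (∀ k, 0 ≤ τ k) ∧ (∀ k, 0 ≤ p k) ∧ (∀ k, 0 ≤ f k) ∧ τ₀ + ∑ k, τ k ≤ T ∧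
    (∀ k, τ k * p k + T * γ * f k ^ 3 ≤ τ₀ * η * P * gain h q k v₀) ∧
    r = B * ∑ k, τ k * Real.logb 2 (1 + p k * gain h q k v₁ / σ2) + ∑ k, T * f k / C}

/-- Optimal computation rate of NOMA offloading with separate IRS beamforming vectors for
DL WPT and UL offloading (Case 2). -/
noncomputable def RNOMA2 {K N : ℕ} (h : Fin K → ℂ) (q : Fin K → Fin N → ℂ)
    (B T C γ η P σ2 : ℝ) : ℝ :=
  sSup {r : ℝ | ∃ (v₀ v₁ : Fin N → ℂ) (τ₀ τ₁ : ℝ) (p f : Fin K → ℝ),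
    (∀ n, ‖v₀ n‖ = 1) ∧ (∀ n, ‖v₁ n‖ = 1) ∧ 0 ≤ τ₀ ∧ 0 ≤ τ₁ ∧
    (∀ k, 0 ≤ p k) ∧ (∀ k, 0 ≤ f k) ∧ τ₀ + τ₁ ≤ T ∧
    (∀ k, τ₁ * p k + T * γ * f k ^ 3 ≤ τ₀ * η * P * gain h q k v₀) ∧
    r = B * τ₁ * Real.logb 2 (1 + (∑ k, p k * gain h q k v₁) / σ2) + ∑ k, T * f k / C}

section Aux

private lemma gain_nonneg' {K N : ℕ} (h : Fin K → ℂ) (q : Fin K → Fin N → ℂ)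
    (k : Fin K) (v : Fin N → ℂ) : 0 ≤ gain h q k v :=
  pow_nonneg (norm_nonneg _) 2

private lemma gain_le' {K N : ℕ} (h : Fin K → ℂ) (q : Fin K → Fin N → ℂ)
    (k : Fin K) (v : Fin N → ℂ) (hv : ∀ n, ‖v n‖ = 1) :
    gain h q k v ≤ (‖h k‖ + ∑ n, ‖q k n‖) ^ 2 := by
  have habs : ‖(starRingEnd ℂ) (h k) + ∑ n, (starRingEnd ℂ) (q k n) * v n‖
      ≤ ‖h k‖ + ∑ n, ‖q k n‖ := by
    calc ‖(starRingEnd ℂ) (h k) + ∑ n, (starRingEnd ℂ) (q k n) * v n‖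
        ≤ ‖(starRingEnd ℂ) (h k)‖ +
            ‖∑ n, (starRingEnd ℂ) (q k n) * v n‖ := norm_add_le _ _
      _ ≤ ‖h k‖ + ∑ n, ‖(starRingEnd ℂ) (q k n) * v n‖ := by
          rw [Complex.norm_conj]
          exact add_le_add le_rfl (norm_sum_le _ _)
      _ = ‖h k‖ + ∑ n, ‖q k n‖ := by
          congr 1
          refine Finset.sum_congr rfl fun n _ => ?_
          rw [norm_mul, Complex.norm_conj, hv n, mul_one]
  exact pow_le_pow_left₀ (norm_nonneg _) habs 2

private lemma logb_rate_le' (σ2 : ℝ) (hσ : 0 < σ2) (τ x : ℝ) (hτ : 0 ≤ τ) (hx : 0 ≤ x) :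
    τ * Real.logb 2 (1 + x / σ2) ≤ τ * x / (σ2 * Real.log 2) := by
  have hlog2 : 0 < Real.log 2 := Real.log_pos one_lt_two
  have hx2 : 0 ≤ x / σ2 := div_nonneg hx hσ.le
  have h1 : Real.log (1 + x / σ2) ≤ x / σ2 := by
    have := Real.log_le_sub_one_of_pos (by linarith : (0:ℝ) < 1 + x / σ2)
    linarith
  have h2 : Real.logb 2 (1 + x / σ2) ≤ (x / σ2) / Real.log 2 := by
    rw [Real.logb]
    gcongr
  calc τ * Real.logb 2 (1 + x / σ2) ≤ τ * ((x / σ2) / Real.log 2) :=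
        mul_le_mul_of_nonneg_left h2 hτ
    _ = τ * x / (σ2 * Real.log 2) := by ring

private lemma cube_bound' (f A : ℝ) (hf : 0 ≤ f) (hA : f ^ 3 ≤ A) : f ≤ max 1 A := by
  rcases le_total f 1 with hc | hc
  · exact hc.trans (le_max_left _ _)
  · have hf3 : f ≤ f ^ 3 := by
      nlinarith [mul_nonneg (mul_nonneg hf (by linarith : (0:ℝ) ≤ f - 1))
        (by linarith : (0:ℝ) ≤ f + 1)]
    exact (hf3.trans hA).trans (le_max_right _ _)

end Aux

/-- Theorem 1: `R_TDMA^{case2} = R_NOMA^{case2}`. -/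
theorem RTDMA2_eq_RNOMA2 {K N : ℕ} (hK : 1 ≤ K) (hN : 1 ≤ N)
    (h : Fin K → ℂ) (q : Fin K → Fin N → ℂ) (B T C γ η P σ2 : ℝ)
    (hB : 0 < B) (hT : 0 < T) (hC : 0 < C) (hγ : 0 < γ)
    (hη : 0 < η) (hP : 0 < P) (hσ : 0 < σ2) :
    RTDMA2 h q B T C γ η P σ2 = RNOMA2 h q B T C γ η P σ2 := by
  have hlog2 : 0 < Real.log 2 := Real.log_pos one_lt_two
  set G : Fin K → ℝ := fun k => (‖h k‖ + ∑ n, ‖q k n‖) ^ 2 with hGdef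
  have hGnn : ∀ k, 0 ≤ G k := fun k =>
    pow_nonneg (add_nonneg (norm_nonneg _)
      (Finset.sum_nonneg fun n _ => norm_nonneg _)) 2
  set M : ℝ := B * ∑ k, T * η * P * G k ^ 2 / (σ2 * Real.log 2)
      + ∑ k, T * max 1 (η * P * G k / γ) / C with hM
  -- the common per-device bound on the energy budget
  have hEbound : ∀ (w₀ : Fin N → ℂ), (∀ n, ‖w₀ n‖ = 1) → ∀ (s₀ : ℝ), 0 ≤ s₀ →
      s₀ ≤ T → ∀ k, s₀ * η * P * gain h q k w₀ ≤ T * η * P * G k := by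
    intro w₀ hw₀ s₀ hs₀ hs₀T k
    have hgle : gain h q k w₀ ≤ G k := gain_le' h q k w₀ hw₀
    have hgnn : 0 ≤ gain h q k w₀ := gain_nonneg' h q k w₀
    have h1 : s₀ * η * P * gain h q k w₀ ≤ T * η * P * gain h q k w₀ :=
      mul_le_mul_of_nonneg_right
        (mul_le_mul_of_nonneg_right (mul_le_mul_of_nonneg_right hs₀T hη.le) hP.le) hgnn
    have h2 : T * η * P * gain h q k w₀ ≤ T * η * P * G k :=
      mul_le_mul_of_nonneg_left hgle (by positivity)
    linarith
  -- upper bound on the NOMA achievable set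
  have hbN : ∀ x ∈ {r : ℝ | ∃ (v₀ v₁ : Fin N → ℂ) (τ₀ τ₁ : ℝ) (p f : Fin K → ℝ),
      (∀ n, ‖v₀ n‖ = 1) ∧ (∀ n, ‖v₁ n‖ = 1) ∧ 0 ≤ τ₀ ∧ 0 ≤ τ₁ ∧
      (∀ k, 0 ≤ p k) ∧ (∀ k, 0 ≤ f k) ∧ τ₀ + τ₁ ≤ T ∧
      (∀ k, τ₁ * p k + T * γ * f k ^ 3 ≤ τ₀ * η * P * gain h q k v₀) ∧
      r = B * τ₁ * Real.logb 2 (1 + (∑ k, p k * gain h q k v₁) / σ2) + ∑ k, T * f k / C},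
      x ≤ M := by
    rintro x ⟨w₀, w₁, s₀, s₁, pp, ff, hw₀, hw₁, hs₀, hs₁, hpp, hff, hstime, hsen, rfl⟩
    have hs₀T : s₀ ≤ T := by linarith
    have hEk : ∀ k, s₁ * pp k + T * γ * ff k ^ 3 ≤ T * η * P * G k := fun k =>
      (hsen k).trans (hEbound w₀ hw₀ s₀ hs₀ hs₀T k)
    have hτp : ∀ k, s₁ * pp k ≤ T * η * P * G k := by
      intro k
      have h0 : 0 ≤ T * γ * ff k ^ 3 := mul_nonneg (mul_nonneg hT.le hγ.le) (pow_nonneg (hff k) 3)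
      linarith [hEk k]
    have hfle : ∀ k, ff k ≤ max 1 (η * P * G k / γ) := by
      intro k
      have h0 : 0 ≤ s₁ * pp k := mul_nonneg hs₁ (hpp k)
      have h5 : T * (γ * ff k ^ 3) ≤ T * (η * P * G k) := by nlinarith [hEk k]
      have h6 : γ * ff k ^ 3 ≤ η * P * G k := le_of_mul_le_mul_left h5 hT
      exact cube_bound' _ _ (hff k) (by rw [le_div_iff₀ hγ]; linarith)
    set S : ℝ := ∑ k, pp k * gain h q k w₁ with hS
    have hSnn : 0 ≤ S :=
      Finset.sum_nonneg fun k _ => mul_nonneg (hpp k) (gain_nonneg' h q k w₁)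
    have hterm1 : B * s₁ * Real.logb 2 (1 + S / σ2)
        ≤ B * ∑ k, T * η * P * G k ^ 2 / (σ2 * Real.log 2) := by
      have h6 : s₁ * Real.logb 2 (1 + S / σ2) ≤ s₁ * S / (σ2 * Real.log 2) :=
        logb_rate_le' σ2 hσ s₁ S hs₁ hSnn
      have h7 : s₁ * S = ∑ k, s₁ * (pp k * gain h q k w₁) := by
        rw [hS, Finset.mul_sum]
      have h8 : ∀ k, s₁ * (pp k * gain h q k w₁) ≤ T * η * P * G k * G k := by
        intro k
        have hg1le : gain h q k w₁ ≤ G k := gain_le' h q k w₁ hw₁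
        have hg1nn : 0 ≤ gain h q k w₁ := gain_nonneg' h q k w₁
        have := mul_le_mul (hτp k) hg1le hg1nn (mul_nonneg (mul_nonneg (mul_nonneg hT.le hη.le) hP.le) (hGnn k))
        calc s₁ * (pp k * gain h q k w₁) = s₁ * pp k * gain h q k w₁ := (mul_assoc _ _ _).symm
          _ ≤ T * η * P * G k * G k := this
      have h9 : s₁ * S ≤ ∑ k, T * η * P * G k * G k := by
        rw [h7]; exact Finset.sum_le_sum fun k _ => h8 k
      have h10 : s₁ * S / (σ2 * Real.log 2)
          ≤ (∑ k, T * η * P * G k * G k) / (σ2 * Real.log 2) := by gcongr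
      calc B * s₁ * Real.logb 2 (1 + S / σ2) = B * (s₁ * Real.logb 2 (1 + S / σ2)) :=
            mul_assoc _ _ _
        _ ≤ B * ((∑ k, T * η * P * G k * G k) / (σ2 * Real.log 2)) :=
            mul_le_mul_of_nonneg_left (h6.trans h10) hB.le
        _ = B * ∑ k, T * η * P * G k ^ 2 / (σ2 * Real.log 2) := by
            rw [Finset.sum_div]
            congr 1
            exact Finset.sum_congr rfl fun k _ => by ring
    have hterm2 : ∑ k, T * ff k / C ≤ ∑ k, T * max 1 (η * P * G k / γ) / C := by
      refine Finset.sum_le_sum fun k _ => ?_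
      gcongr
      exact hfle k
    rw [hM]
    exact add_le_add hterm1 hterm2
  -- upper bound on the TDMA achievable set
  have hbT : ∀ x ∈ {r : ℝ | ∃ (v₀ v₁ : Fin N → ℂ) (τ₀ : ℝ) (τ p f : Fin K → ℝ),
      (∀ n, ‖v₀ n‖ = 1) ∧ (∀ n, ‖v₁ n‖ = 1) ∧ 0 ≤ τ₀ ∧
      (∀ k, 0 ≤ τ k) ∧ (∀ k, 0 ≤ p k) ∧ (∀ k, 0 ≤ f k) ∧ τ₀ + ∑ k, τ k ≤ T ∧
      (∀ k, τ k * p k + T * γ * f k ^ 3 ≤ τ₀ * η * P * gain h q k v₀) ∧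
      r = B * ∑ k, τ k * Real.logb 2 (1 + p k * gain h q k v₁ / σ2) + ∑ k, T * f k / C},
      x ≤ M := by
    rintro x ⟨w₀, w₁, s₀, s, pp, ff, hw₀, hw₁, hs₀, hs, hpp, hff, hstime, hsen, rfl⟩
    have hsum_nn : 0 ≤ ∑ k, s k := Finset.sum_nonneg fun k _ => hs k
    have hs₀T : s₀ ≤ T := by linarith
    have hEk : ∀ k, s k * pp k + T * γ * ff k ^ 3 ≤ T * η * P * G k := fun k =>
      (hsen k).trans (hEbound w₀ hw₀ s₀ hs₀ hs₀T k)
    have hτp : ∀ k, s k * pp k ≤ T * η * P * G k := by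
      intro k
      have h0 : 0 ≤ T * γ * ff k ^ 3 := mul_nonneg (mul_nonneg hT.le hγ.le) (pow_nonneg (hff k) 3)
      linarith [hEk k]
    have hfle : ∀ k, ff k ≤ max 1 (η * P * G k / γ) := by
      intro k
      have h0 : 0 ≤ s k * pp k := mul_nonneg (hs k) (hpp k)
      have h5 : T * (γ * ff k ^ 3) ≤ T * (η * P * G k) := by nlinarith [hEk k]
      have h6 : γ * ff k ^ 3 ≤ η * P * G k := le_of_mul_le_mul_left h5 hT
      exact cube_bound' _ _ (hff k) (by rw [le_div_iff₀ hγ]; linarith)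
    have hterm1 : B * ∑ k, s k * Real.logb 2 (1 + pp k * gain h q k w₁ / σ2)
        ≤ B * ∑ k, T * η * P * G k ^ 2 / (σ2 * Real.log 2) := by
      refine mul_le_mul_of_nonneg_left (Finset.sum_le_sum fun k _ => ?_) hB.le
      have hg1le : gain h q k w₁ ≤ G k := gain_le' h q k w₁ hw₁
      have hg1nn : 0 ≤ gain h q k w₁ := gain_nonneg' h q k w₁
      have hxnn : 0 ≤ pp k * gain h q k w₁ := mul_nonneg (hpp k) hg1nn
      have h6 := logb_rate_le' σ2 hσ (s k) (pp k * gain h q k w₁) (hs k) hxnn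
      have h8 : s k * (pp k * gain h q k w₁) ≤ T * η * P * G k * G k := by
        have := mul_le_mul (hτp k) hg1le hg1nn (mul_nonneg (mul_nonneg (mul_nonneg hT.le hη.le) hP.le) (hGnn k))
        calc s k * (pp k * gain h q k w₁) = s k * pp k * gain h q k w₁ := (mul_assoc _ _ _).symm
          _ ≤ T * η * P * G k * G k := this
      have h10 : s k * (pp k * gain h q k w₁) / (σ2 * Real.log 2)
          ≤ T * η * P * G k * G k / (σ2 * Real.log 2) := by gcongr
      calc s k * Real.logb 2 (1 + pp k * gain h q k w₁ / σ2)
          ≤ s k * (pp k * gain h q k w₁) / (σ2 * Real.log 2) := h6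
        _ ≤ T * η * P * G k * G k / (σ2 * Real.log 2) := h10
        _ = T * η * P * G k ^ 2 / (σ2 * Real.log 2) := by ring
    have hterm2 : ∑ k, T * ff k / C ≤ ∑ k, T * max 1 (η * P * G k / γ) / C := by
      refine Finset.sum_le_sum fun k _ => ?_
      gcongr
      exact hfle k
    rw [hM]
    exact add_le_add hterm1 hterm2
  rw [RTDMA2, RNOMA2]
  apply le_antisymm
  · -- TDMA ≤ NOMA
    refine csSup_le ⟨0, fun _ => 1, fun _ => 1, 0, 0, 0, 0, fun n => by simp, fun n => by simp,
      le_refl 0, fun k => le_refl 0, fun k => le_refl 0, fun k => le_refl 0,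
      by simpa using hT.le, fun k => by norm_num, by simp⟩ ?_
    rintro r ⟨v₀, v₁, τ₀, τ, p, f, hv₀, hv₁, hτ₀, hτ, hp, hf, htime, hen, rfl⟩
    by_cases hτ1 : ∑ k, τ k = 0
    · -- all offloading times are zero
      have hτk0 : ∀ k, τ k = 0 := by
        intro k
        have h1 : τ k ≤ ∑ j, τ j := Finset.single_le_sum (fun i _ => hτ i) (Finset.mem_univ k)
        have := hτ k
        rw [hτ1] at h1
        linarith
      refine le_csSup ⟨M, hbN⟩ ⟨v₀, v₁, τ₀, 0, fun _ => 0, f, hv₀, hv₁, hτ₀, le_refl 0,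
        fun k => le_refl 0, hf, by rw [hτ1] at htime; linarith, fun k => ?_, ?_⟩
      · have h1 := hen k
        have h2 : 0 ≤ τ k * p k := mul_nonneg (hτ k) (hp k)
        simpa using by linarith
      · simp [hτk0]
    · have hτ1pos : 0 < ∑ k, τ k :=
        lt_of_le_of_ne (Finset.sum_nonneg fun k _ => hτ k) (Ne.symm hτ1)
      have hτ1ne : (∑ k, τ k) ≠ 0 := ne_of_gt hτ1pos
      set τ₁ : ℝ := ∑ k, τ k with hτ₁def
      set p' : Fin K → ℝ := fun k => τ k * p k / τ₁ with hp'def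
      have hp'nn : ∀ k, 0 ≤ p' k := fun k =>
        div_nonneg (mul_nonneg (hτ k) (hp k)) hτ1pos.le
      -- Jensen's inequality
      have hynn : ∀ k, (0:ℝ) < 1 + p k * gain h q k v₁ / σ2 := by
        intro k
        have := mul_nonneg (hp k) (gain_nonneg' h q k v₁)
        have := div_nonneg this hσ.le
        linarith
      have hjen := (strictConcaveOn_log_Ioi.concaveOn).le_map_sum
        (t := Finset.univ) (w := fun k => τ k / τ₁)
        (p := fun k => 1 + p k * gain h q k v₁ / σ2)
        (fun i _ => div_nonneg (hτ i) hτ1pos.le)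
        (by rw [← Finset.sum_div, ← hτ₁def, div_self hτ1ne])
        (fun i _ => Set.mem_Ioi.2 (hynn i))
      simp only [smul_eq_mul] at hjen
      have harg : ∑ i, (τ i / τ₁) * (1 + p i * gain h q i v₁ / σ2)
          = 1 + (∑ k, p' k * gain h q k v₁) / σ2 := by
        have hterm : ∀ i : Fin K, (τ i / τ₁) * (1 + p i * gain h q i v₁ / σ2)
            = τ i / τ₁ + p' i * gain h q i v₁ / σ2 := by
          intro i
          rw [hp'def]
          ring
        rw [Finset.sum_congr rfl fun i _ => hterm i, Finset.sum_add_distrib,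
          ← Finset.sum_div, ← hτ₁def, div_self hτ1ne, ← Finset.sum_div]
      rw [harg] at hjen
      have hsum : ∑ i, τ i * Real.log (1 + p i * gain h q i v₁ / σ2)
          ≤ τ₁ * Real.log (1 + (∑ k, p' k * gain h q k v₁) / σ2) := by
        have hmul := mul_le_mul_of_nonneg_left hjen hτ1pos.le
        rw [Finset.mul_sum] at hmul
        refine le_trans (le_of_eq (Finset.sum_congr rfl fun i _ => ?_)) hmul
        field_simp
      have hkey : B * ∑ k, τ k * Real.logb 2 (1 + p k * gain h q k v₁ / σ2)
          ≤ B * τ₁ * Real.logb 2 (1 + (∑ k, p' k * gain h q k v₁) / σ2) := by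
        simp only [Real.logb]
        have e1 : ∑ k, τ k * (Real.log (1 + p k * gain h q k v₁ / σ2) / Real.log 2)
            = (∑ k, τ k * Real.log (1 + p k * gain h q k v₁ / σ2)) / Real.log 2 := by
          rw [Finset.sum_div]
          exact Finset.sum_congr rfl fun i _ => (mul_div_assoc _ _ _).symm
        rw [e1]
        have e2 : B * τ₁ * (Real.log (1 + (∑ k, p' k * gain h q k v₁) / σ2) / Real.log 2)
            = B * ((τ₁ * Real.log (1 + (∑ k, p' k * gain h q k v₁) / σ2)) / Real.log 2) := by
          ring
        rw [e2]
        gcongr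
      refine le_trans (add_le_add hkey (le_refl (∑ k, T * f k / C)))
        (le_csSup ⟨M, hbN⟩ ⟨v₀, v₁, τ₀, τ₁, p', f, hv₀, hv₁, hτ₀, hτ1pos.le, hp'nn, hf,
          htime, fun k => ?_, rfl⟩)
      have : τ₁ * p' k = τ k * p k := by
        rw [hp'def]
        field_simp
      rw [this]
      exact hen k
  · -- NOMA ≤ TDMA
    refine csSup_le ⟨0, fun _ => 1, fun _ => 1, 0, 0, 0, 0, fun n => by simp, fun n => by simp,
      le_refl 0, le_refl 0, fun k => le_refl 0, fun k => le_refl 0,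
      by simpa using hT.le, fun k => by norm_num, by simp⟩ ?_
    rintro r ⟨v₀, v₁, τ₀, τ₁, p, f, hv₀, hv₁, hτ₀, hτ₁, hp, hf, htime, hen, rfl⟩
    set S : ℝ := ∑ k, p k * gain h q k v₁ with hSdef
    have hSnn : 0 ≤ S := Finset.sum_nonneg fun k _ => mul_nonneg (hp k) (gain_nonneg' h q k v₁)
    by_cases hS0 : S = 0
    · refine le_csSup ⟨M, hbT⟩ ⟨v₀, v₁, τ₀, fun _ => 0, fun _ => 0, f, hv₀, hv₁, hτ₀,
        fun k => le_refl 0, fun k => le_refl 0, hf, by simpa using by linarith, fun k => ?_, ?_⟩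
      · have h1 := hen k
        have h2 : 0 ≤ τ₁ * p k := mul_nonneg hτ₁ (hp k)
        simpa using by linarith
      · rw [hS0]
        simp
    · have hSpos : 0 < S := lt_of_le_of_ne hSnn (Ne.symm hS0)
      set τ' : Fin K → ℝ := fun k => τ₁ * (p k * gain h q k v₁) / S with hτ'def
      set p'' : Fin K → ℝ := fun k => if gain h q k v₁ = 0 then 0 else S / gain h q k v₁
        with hp''def
      have hτ'nn : ∀ k, 0 ≤ τ' k := fun k =>
        div_nonneg (mul_nonneg hτ₁ (mul_nonneg (hp k) (gain_nonneg' h q k v₁))) hSpos.le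
      have hp''nn : ∀ k, 0 ≤ p'' k := by
        intro k
        rw [hp''def]
        by_cases hg : gain h q k v₁ = 0
        · simp [hg]
        · simp only [hg, if_false]
          exact div_nonneg hSpos.le (gain_nonneg' h q k v₁)
      have hτ'sum : ∑ k, τ' k = τ₁ := by
        rw [hτ'def]
        simp only
        rw [← Finset.sum_div, ← Finset.mul_sum, ← hSdef, mul_div_assoc, div_self hS0, mul_one]
      have hτ'p : ∀ k, τ' k * p'' k ≤ τ₁ * p k := by
        intro k
        rw [hτ'def, hp''def]
        by_cases hg : gain h q k v₁ = 0
        · simp [hg]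
          exact mul_nonneg hτ₁ (hp k)
        · simp only [hg, if_false]
          rw [div_mul_div_comm]
          rw [div_le_iff₀ (mul_pos hSpos (lt_of_le_of_ne (gain_nonneg' h q k v₁) (Ne.symm hg)))]
          ring_nf
          nlinarith [hSpos, gain_nonneg' h q k v₁]
      have hrate : ∀ k, τ' k * Real.logb 2 (1 + p'' k * gain h q k v₁ / σ2)
          = τ' k * Real.logb 2 (1 + S / σ2) := by
        intro k
        by_cases hg : gain h q k v₁ = 0
        · have hτ'0 : τ' k = 0 := by rw [hτ'def]; simp [hg]
          rw [hτ'0, zero_mul, zero_mul]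
        · have : p'' k * gain h q k v₁ = S := by
            rw [hp''def]
            simp only [hg, if_false]
            field_simp
          rw [this]
      refine le_csSup ⟨M, hbT⟩ ⟨v₀, v₁, τ₀, τ', p'', f, hv₀, hv₁, hτ₀, hτ'nn, hp''nn, hf,
        by rw [hτ'sum]; exact htime, fun k => ?_, ?_⟩
      · have h1 := hen k
        have h2 := hτ'p k
        linarith
      · rw [Finset.sum_congr rfl fun k _ => hrate k, ← Finset.sum_mul, hτ'sum]
        ring
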